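/- For real quaternions, if α = (μ + i√S)/2 and β = (νi + j√T)/√S where S = 4A - μ² > 0 and T = BS - ν² > 0 (A, B, μ, ν real), then for all real x, y, z, w, the norm of x + yα + zβ + wαβ equals (x² + μxy + Ay²) + ν(yz - xw) + B(z² + μzw + Aw²). -/

import Mathlib

set_option maxHeartbeats 1000000


open Quaternion

/-- For real quaternions, with `α = (μ + i√S)/2` and
`β = (νi + j√T)/√S`, where `S = 4A - μ² > 0`, `T = BS - ν² > 0`, the norm of
`x + yα + zβ + wαβ` equals
`(x² + μxy + Ay²) + ν(yz - xw) + B(z² + μzw + Aw²)`. -/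
theorem quaternion_norm_formula
    (A B μ ν : ℝ) (S T : ℝ) (hS : S = 4 * A - μ ^ 2) (hT : T = B * S - ν ^ 2)
    (hSpos : 0 < S) (hTpos : 0 < T)
    (α β : ℍ[ℝ])
    (hα : α = ⟨μ / 2, Real.sqrt S / 2, 0, 0⟩)
    (hβ : β = ⟨0, ν / Real.sqrt S, Real.sqrt T / Real.sqrt S, 0⟩)
    (x y z w : ℝ) :
    Quaternion.normSq ((x : ℍ[ℝ]) + (y : ℍ[ℝ]) * α + (z : ℍ[ℝ]) * β +
        (w : ℍ[ℝ]) * (α * β)) =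
      (x ^ 2 + μ * x * y + A * y ^ 2) + ν * (y * z - x * w) +
        B * (z ^ 2 + μ * z * w + A * w ^ 2) := by
  have e1 : α.re = μ / 2 := by rw [hα]
  have e2 : α.imI = Real.sqrt S / 2 := by rw [hα]
  have e3 : α.imJ = 0 := by rw [hα]
  have e4 : α.imK = 0 := by rw [hα]
  have f1 : β.re = 0 := by rw [hβ]
  have f2 : β.imI = ν / Real.sqrt S := by rw [hβ]
  have f3 : β.imJ = Real.sqrt T / Real.sqrt S := by rw [hβ]
  have f4 : β.imK = 0 := by rw [hβ]
  clear hα hβ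
  subst hT hS
  have hs2 := Real.sq_sqrt hSpos.le
  have ht2 := Real.sq_sqrt hTpos.le
  have hs0 := Real.sqrt_ne_zero'.mpr hSpos
  simp only [Quaternion.normSq_def', Quaternion.re_mul, Quaternion.imI_mul,
    Quaternion.imJ_mul, Quaternion.imK_mul, Quaternion.re_add, Quaternion.imI_add,
    Quaternion.imJ_add, Quaternion.imK_add, Quaternion.re_coe, Quaternion.imI_coe,
    Quaternion.imJ_coe, Quaternion.imK_coe, QuaternionAlgebra.re_mul, QuaternionAlgebra.imI_mul,
    QuaternionAlgebra.imJ_mul, QuaternionAlgebra.imK_mul, QuaternionAlgebra.re_coe,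
    QuaternionAlgebra.imI_coe, QuaternionAlgebra.imJ_coe, QuaternionAlgebra.imK_coe, e1, e2, e3, e4, f1, f2, f3, f4]
  field_simp
  generalize Real.sqrt (4*A - μ^2) = s at *
  generalize Real.sqrt (B*(4*A-μ^2) - ν^2) = t at *
  have hA : A = (s^2+μ^2)/4 := by linarith
  have hB : B = (t^2+ν^2)/s^2 := by
    field_simp
    linear_combination B*hs2 - ht2
  subst hA hB
  field_simp
  have hst : ((s ^ 2 + μ ^ 2 - μ ^ 2) * (t ^ 2 + ν ^ 2) - s ^ 2 * ν ^ 2) / s ^ 2 = t ^ 2 := by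
    field_simp
    ring
  rw [hst, Real.sqrt_sq_eq_abs, ← sq_abs t]
  ring
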